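/- Let A ⊂ ℕ be defined by A = [2,3] ∪ ⋃_{k≥1} ({c_k} ∪ B_k ∪ F_k) with c_k = 4·5^{k−1}, B_k = [5·5^{k−1}, 6·5^{k−1} − 1], F_k = [10·5^{k−1} − 1, 15·5^{k−1}]. Then for every k ≥ 0, the interval [4, 6·5^k] is contained in A_k + A_k, where A_k is the union of [2,3] with the stages 1 through k. -/
import Mathlib


open Pointwise

def c (k : ℕ) : ℕ := 4 * 5 ^ (k - 1)
def B (k : ℕ) : Set ℕ := Set.Icc (5 * 5 ^ (k - 1)) (6 * 5 ^ (k - 1) - 1)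
def F (k : ℕ) : Set ℕ := Set.Icc (10 * 5 ^ (k - 1) - 1) (15 * 5 ^ (k - 1))
def A : Set ℕ := Set.Icc 2 3 ∪ ⋃ k ∈ {k : ℕ | 1 ≤ k}, ({c k} ∪ B k ∪ F k)

def Apartial (k : ℕ) : Set ℕ :=
  Set.Icc 2 3 ∪ ⋃ i ∈ Set.Icc 1 k, ({c i} ∪ B i ∪ F i)

lemma mem_Ap_small {m x : ℕ} (h : 2 ≤ x) (h' : x ≤ 3) : x ∈ Apartial m :=
  Or.inl ⟨h, h'⟩

lemma mem_Ap_c {i m : ℕ} (h1 : 1 ≤ i) (h2 : i ≤ m) : c i ∈ Apartial m :=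
  Or.inr (Set.mem_biUnion ⟨h1, h2⟩ (Or.inl (Or.inl rfl)))

lemma mem_Ap_B {i m x : ℕ} (h1 : 1 ≤ i) (h2 : i ≤ m) (hx : x ∈ B i) : x ∈ Apartial m :=
  Or.inr (Set.mem_biUnion ⟨h1, h2⟩ (Or.inl (Or.inr hx)))

lemma mem_Ap_F {i m x : ℕ} (h1 : 1 ≤ i) (h2 : i ≤ m) (hx : x ∈ F i) : x ∈ Apartial m :=
  Or.inr (Set.mem_biUnion ⟨h1, h2⟩ (Or.inr hx))

lemma Ap_mono {m n : ℕ} (h : m ≤ n) : Apartial m ⊆ Apartial n := by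
  apply Set.union_subset_union_right
  exact Set.biUnion_subset_biUnion_left (Set.Icc_subset_Icc_right h)

lemma step0 : Set.Icc 4 30 ⊆ Apartial 1 + Apartial 1 := by
  have h2 : (2:ℕ) ∈ Apartial 1 := mem_Ap_small (by norm_num) (by norm_num)
  have h3 : (3:ℕ) ∈ Apartial 1 := mem_Ap_small (by norm_num) (by norm_num)
  have h4 : (4:ℕ) ∈ Apartial 1 := mem_Ap_c le_rfl le_rfl
  have h5 : (5:ℕ) ∈ Apartial 1 := mem_Ap_B le_rfl le_rfl (by simp [B])
  have hF : ∀ x : ℕ, 9 ≤ x → x ≤ 15 → x ∈ Apartial 1 := fun x hx hx' =>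
    mem_Ap_F le_rfl le_rfl (by simp [F]; omega)
  intro n hn
  obtain ⟨hn1, hn2⟩ := Set.mem_Icc.mp hn
  interval_cases n
  · simpa using Set.add_mem_add h2 h2
  · simpa using Set.add_mem_add h2 h3
  · simpa using Set.add_mem_add h3 h3
  · simpa using Set.add_mem_add h2 h5
  · simpa using Set.add_mem_add h3 h5
  · simpa using Set.add_mem_add h4 h5
  · simpa using Set.add_mem_add h5 h5
  · simpa using Set.add_mem_add h2 (hF 9 (by norm_num) (by norm_num))
  · simpa using Set.add_mem_add h2 (hF 10 (by norm_num) (by norm_num))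
  · simpa using Set.add_mem_add h2 (hF 11 (by norm_num) (by norm_num))
  · simpa using Set.add_mem_add h2 (hF 12 (by norm_num) (by norm_num))
  · simpa using Set.add_mem_add h2 (hF 13 (by norm_num) (by norm_num))
  · simpa using Set.add_mem_add h2 (hF 14 (by norm_num) (by norm_num))
  · simpa using Set.add_mem_add h2 (hF 15 (by norm_num) (by norm_num))
  · simpa using Set.add_mem_add h3 (hF 15 (by norm_num) (by norm_num))
  · simpa using Set.add_mem_add h4 (hF 15 (by norm_num) (by norm_num))
  · simpa using Set.add_mem_add h5 (hF 15 (by norm_num) (by norm_num))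
  · simpa using Set.add_mem_add (hF 9 (by norm_num) (by norm_num)) (hF 12 (by norm_num) (by norm_num))
  · simpa using Set.add_mem_add (hF 9 (by norm_num) (by norm_num)) (hF 13 (by norm_num) (by norm_num))
  · simpa using Set.add_mem_add (hF 9 (by norm_num) (by norm_num)) (hF 14 (by norm_num) (by norm_num))
  · simpa using Set.add_mem_add (hF 9 (by norm_num) (by norm_num)) (hF 15 (by norm_num) (by norm_num))
  · simpa using Set.add_mem_add (hF 10 (by norm_num) (by norm_num)) (hF 15 (by norm_num) (by norm_num))
  · simpa using Set.add_mem_add (hF 11 (by norm_num) (by norm_num)) (hF 15 (by norm_num) (by norm_num))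
  · simpa using Set.add_mem_add (hF 12 (by norm_num) (by norm_num)) (hF 15 (by norm_num) (by norm_num))
  · simpa using Set.add_mem_add (hF 13 (by norm_num) (by norm_num)) (hF 15 (by norm_num) (by norm_num))
  · simpa using Set.add_mem_add (hF 14 (by norm_num) (by norm_num)) (hF 15 (by norm_num) (by norm_num))
  · simpa using Set.add_mem_add (hF 15 (by norm_num) (by norm_num)) (hF 15 (by norm_num) (by norm_num))

theorem stmt_10 (k : ℕ) :
    Set.Icc 4 (6 * 5 ^ k) ⊆ Apartial k + Apartial k := by
  induction k with
  | zero =>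
    intro n hn
    simp only [pow_zero, mul_one, Set.mem_Icc] at hn
    obtain ⟨hn1, hn2⟩ := hn
    have h2 : (2:ℕ) ∈ Apartial 0 := mem_Ap_small (by norm_num) (by norm_num)
    have h3 : (3:ℕ) ∈ Apartial 0 := mem_Ap_small (by norm_num) (by norm_num)
    interval_cases n
    · simpa using Set.add_mem_add h2 h2
    · simpa using Set.add_mem_add h2 h3
    · simpa using Set.add_mem_add h3 h3
  | succ k ih =>
    rcases Nat.eq_zero_or_pos k with hk | hk
    · subst hk
      simpa using step0
    -- k ≥ 1
    have hp : 5 ≤ 5 ^ k := by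
      calc (5:ℕ) = 5 ^ 1 := (pow_one 5).symm
      _ ≤ 5 ^ k := Nat.pow_le_pow_right (by norm_num) hk
    have hpow : (5:ℕ) ^ (k + 1) = 5 * 5 ^ k := by ring
    have e : 5 * 5 ^ (k - 1) = 5 ^ k := by
      conv_rhs => rw [show k = (k - 1) + 1 by omega]
      ring
    have hc : (4 * 5 ^ k : ℕ) ∈ Apartial (k + 1) := by
      have : c (k + 1) = 4 * 5 ^ k := by simp [c]
      exact this ▸ mem_Ap_c (by omega) le_rfl
    have hB1 : ∀ x : ℕ, 5 * 5 ^ k ≤ x → x ≤ 6 * 5 ^ k - 1 → x ∈ Apartial (k + 1) := by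
      intro x hx hx'
      refine mem_Ap_B (i := k + 1) (by omega) le_rfl ?_
      simp only [B, Nat.add_sub_cancel, Set.mem_Icc]
      exact ⟨hx, hx'⟩
    have hF1 : ∀ x : ℕ, 10 * 5 ^ k - 1 ≤ x → x ≤ 15 * 5 ^ k → x ∈ Apartial (k + 1) := by
      intro x hx hx'
      refine mem_Ap_F (i := k + 1) (by omega) le_rfl ?_
      simp only [F, Nat.add_sub_cancel, Set.mem_Icc]
      exact ⟨hx, hx'⟩
    have hFk : ∀ x : ℕ, 2 * 5 ^ k - 1 ≤ x → x ≤ 3 * 5 ^ k → x ∈ Apartial (k + 1) := by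
      intro x hx hx'
      refine mem_Ap_F (i := k) hk (by omega) ?_
      simp only [F, Set.mem_Icc]
      omega
    intro n hn
    simp only [Set.mem_Icc, hpow] at hn
    by_cases h1 : n ≤ 6 * 5 ^ k
    · exact Set.add_subset_add (Ap_mono (Nat.le_succ k)) (Ap_mono (Nat.le_succ k))
        (ih ⟨hn.1, h1⟩)
    by_cases h2 : n ≤ 6 * 5 ^ k + 2
    · rw [show n = (6 * 5 ^ k - 1) + (n - (6 * 5 ^ k - 1)) by omega]
      exact Set.add_mem_add (hB1 _ (by omega) (by omega)) (mem_Ap_small (by omega) (by omega))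
    by_cases h3 : n ≤ 7 * 5 ^ k
    · rw [show n = 4 * 5 ^ k + (n - 4 * 5 ^ k) by omega]
      exact Set.add_mem_add hc (hFk _ (by omega) (by omega))
    by_cases h4 : n ≤ 8 * 5 ^ k
    · rw [show n = 5 * 5 ^ k + (n - 5 * 5 ^ k) by omega]
      exact Set.add_mem_add (hB1 _ (by omega) (by omega)) (hFk _ (by omega) (by omega))
    by_cases h5 : n ≤ 9 * 5 ^ k - 1
    · rw [show n = (6 * 5 ^ k - 1) + (n - (6 * 5 ^ k - 1)) by omega]
      exact Set.add_mem_add (hB1 _ (by omega) (by omega)) (hFk _ (by omega) (by omega))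
    by_cases h6 : n ≤ 10 * 5 ^ k - 1
    · rw [show n = 4 * 5 ^ k + (n - 4 * 5 ^ k) by omega]
      exact Set.add_mem_add hc (hB1 _ (by omega) (by omega))
    by_cases h7 : n ≤ 10 * 5 ^ k
    · rw [show n = 5 * 5 ^ k + (n - 5 * 5 ^ k) by omega]
      exact Set.add_mem_add (hB1 _ (by omega) (by omega)) (hB1 _ (by omega) (by omega))
    by_cases h8 : n ≤ 15 * 5 ^ k + 2
    · rw [show n = 2 + (n - 2) by omega]
      exact Set.add_mem_add (mem_Ap_small (by omega) (by omega)) (hF1 _ (by omega) (by omega))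
    by_cases h9 : n ≤ 16 * 5 ^ k - 2
    · rw [show n = (n - (10 * 5 ^ k - 1)) + (10 * 5 ^ k - 1) by omega]
      exact Set.add_mem_add (hB1 _ (by omega) (by omega)) (hF1 _ (by omega) (by omega))
    by_cases h10 : n ≤ 21 * 5 ^ k - 1
    · rw [show n = (6 * 5 ^ k - 1) + (n - (6 * 5 ^ k - 1)) by omega]
      exact Set.add_mem_add (hB1 _ (by omega) (by omega)) (hF1 _ (by omega) (by omega))
    by_cases h11 : n ≤ 25 * 5 ^ k - 1
    · rw [show n = 10 * 5 ^ k + (n - 10 * 5 ^ k) by omega]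
      exact Set.add_mem_add (hF1 _ (by omega) (by omega)) (hF1 _ (by omega) (by omega))
    · rw [show n = 15 * 5 ^ k + (n - 15 * 5 ^ k) by omega]
      exact Set.add_mem_add (hF1 _ (by omega) (by omega)) (hF1 _ (by omega) (by omega))
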